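/- arXiv:2507.07304 — 5 statements merged into one kernel-verified Lean document; each statement's English description precedes it below -/
import Mathlib

section
/- Let g be a univariate real polynomial of degree ≤ p, let ν ∈ ℝ, and let l_0, …, l_p be the Lagrange basis polynomials associated with the nodes ξ_0, …, ξ_p (so l_i has degree p and l_i(ξ_j) = 1 if i = j and 0 otherwise). Define q̃(ξ, τ) := ∑_{i=0}^{p} g(ξ_i) · l_i(ξ − ν(τ+1)). Then q̃ ∈ V_p, q̃(ξ, −1) = g(ξ) for all ξ ∈ ℝ, and q̃ satisfies the predictor equation with data g; in particular, the predictor recovers the previous solution at the beginning of the time step. -/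
open BigOperators MvPolynomial

/-- Evaluation of a bivariate polynomial `Q` at the point `(x, t)`; variable `0` is the
space coordinate `ξ` and variable `1` is the time coordinate `τ`. -/
noncomputable def ev (Q : MvPolynomial (Fin 2) ℝ) (x t : ℝ) : ℝ :=
  MvPolynomial.eval ![x, t] Q

/-- `Vp p` is the space of real polynomial functions of `(ξ, τ)` of degree at most `p`
in each variable separately. -/
def Vp (p : ℕ) : Set (MvPolynomial (Fin 2) ℝ) :=
  {Q | Q.degreeOf 0 ≤ p ∧ Q.degreeOf 1 ≤ p}

/-- Discrete volume integral `⟨f⟩ = ∑ i j, w i * w j * f (ξ i) (ξ j)`. -/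
noncomputable def dVol {p : ℕ} (ξ w : Fin (p + 1) → ℝ) (f : ℝ → ℝ → ℝ) : ℝ :=
  ∑ i, ∑ j, w i * w j * f (ξ i) (ξ j)

/-- Discrete temporal-boundary integral `⟨f⟩_{τ=s} = ∑ i, w i * f (ξ i) s`. -/
noncomputable def dT {p : ℕ} (ξ w : Fin (p + 1) → ℝ) (f : ℝ → ℝ → ℝ) (s : ℝ) : ℝ :=
  ∑ i, w i * f (ξ i) s

/-- Discrete spatial-boundary integral `⟨f⟩_{ξ=s} = ∑ j, w j * f s (ξ j)`. -/
noncomputable def dX {p : ℕ} (ξ w : Fin (p + 1) → ℝ) (f : ℝ → ℝ → ℝ) (s : ℝ) : ℝ :=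
  ∑ j, w j * f s (ξ j)

/-- `q̃ ∈ V_p` satisfies the predictor equation with data `g` (a univariate polynomial
in `ξ`) and CFL number `ν` if for every `φ ∈ V_p`:
`⟨φ·(∂q̃/∂τ + ν ∂q̃/∂ξ)⟩ + ⟨φ·(q̃ − g)⟩_{τ=−1} = 0`. -/
def PredictorEq {p : ℕ} (ξ w : Fin (p + 1) → ℝ) (ν : ℝ) (g : Polynomial ℝ)
    (qt : MvPolynomial (Fin 2) ℝ) : Prop :=
  ∀ φ ∈ Vp p,
    dVol ξ w (fun x t => ev φ x t *
        (ev (pderiv 1 qt) x t + ν * ev (pderiv 0 qt) x t)) +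
      dT ξ w (fun x t => ev φ x t * (ev qt x t - g.eval x)) (-1) = 0

/-- `q ∈ V_p` satisfies the corrector equation with data `g` (a univariate polynomial
in `ξ`), left-flux trace `a` and right-flux trace `b` (univariate polynomials in `τ`)
and CFL number `ν` if for every `φ ∈ V_p`:
`⟨φ·(∂q/∂τ + ν ∂q/∂ξ)⟩ + ⟨φ·(q − g)⟩_{τ=−1} + ν ⟨φ·(b − q)⟩_{ξ=1} − ν ⟨φ·(a − q)⟩_{ξ=−1} = 0`. -/
def CorrectorEq {p : ℕ} (ξ w : Fin (p + 1) → ℝ) (ν : ℝ) (g a b : Polynomial ℝ)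
    (q : MvPolynomial (Fin 2) ℝ) : Prop :=
  ∀ φ ∈ Vp p,
    dVol ξ w (fun x t => ev φ x t *
        (ev (pderiv 1 q) x t + ν * ev (pderiv 0 q) x t)) +
      dT ξ w (fun x t => ev φ x t * (ev q x t - g.eval x)) (-1) +
      ν * dX ξ w (fun x t => ev φ x t * (b.eval t - ev q x t)) 1 -
      ν * dX ξ w (fun x t => ev φ x t * (a.eval t - ev q x t)) (-1) = 0

/-- The trace `τ ↦ Q(1, τ)` of a bivariate polynomial on the right spatial boundary
`ξ = 1`, as a univariate polynomial in `τ`. -/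
noncomputable def traceRight (Q : MvPolynomial (Fin 2) ℝ) : Polynomial ℝ :=
  MvPolynomial.eval₂ (Polynomial.C : ℝ →+* Polynomial ℝ) ![(1 : Polynomial ℝ), Polynomial.X] Q

lemma ev_aeval (ν x t : ℝ) (f : Polynomial ℝ) :
    ev (Polynomial.aeval (X 0 - MvPolynomial.C ν * (X 1 + 1) : MvPolynomial (Fin 2) ℝ) f) x t
      = f.eval (x - ν * (t + 1)) := by
  rw [ev, Polynomial.aeval_def, Polynomial.hom_eval₂]
  have h1 : (MvPolynomial.eval ![x, t]).comp (algebraMap ℝ (MvPolynomial (Fin 2) ℝ))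
      = RingHom.id ℝ := by ext r; simp [MvPolynomial.algebraMap_eq]
  have h2 : MvPolynomial.eval ![x, t] (X 0 - MvPolynomial.C ν * (X 1 + 1)) = x - ν * (t + 1) := by
    simp
  rw [h1, h2]; rfl

lemma pderiv_comb (ν : ℝ) (f : Polynomial ℝ) :
    pderiv 1 (Polynomial.aeval (X 0 - MvPolynomial.C ν * (X 1 + 1) : MvPolynomial (Fin 2) ℝ) f)
      + MvPolynomial.C ν *
        pderiv 0 (Polynomial.aeval (X 0 - MvPolynomial.C ν * (X 1 + 1) : MvPolynomial (Fin 2) ℝ) f)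
      = 0 := by
  set s : MvPolynomial (Fin 2) ℝ := X 0 - MvPolynomial.C ν * (X 1 + 1) with hs
  have hs0 : pderiv 0 s = 1 := by
    simp [hs, pderiv_X, Pi.single, Function.update]
  have hs1 : pderiv 1 s = -MvPolynomial.C ν := by
    simp [hs, pderiv_X, Pi.single, Function.update]
  induction f using Polynomial.induction_on' with
  | add p q hp hq =>
    rw [map_add, map_add, map_add, mul_add]
    linear_combination hp + hq
  | monomial n a =>
    have he : Polynomial.aeval s (Polynomial.monomial n a) = MvPolynomial.C a * s ^ n := by
      simp [Polynomial.aeval_monomial, MvPolynomial.algebraMap_eq]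
    rw [he]
    have d0 := Derivation.leibniz_pow (pderiv (R := ℝ) (0 : Fin 2)) s n
    have d1 := Derivation.leibniz_pow (pderiv (R := ℝ) (1 : Fin 2)) s n
    rw [Derivation.leibniz, Derivation.leibniz, d0, d1, hs0, hs1, pderiv_C, pderiv_C]
    simp only [smul_eq_mul, nsmul_eq_mul]
    ring

lemma totalDeg_aeval_le (ν : ℝ) (f : Polynomial ℝ) :
    (Polynomial.aeval (X 0 - MvPolynomial.C ν * (X 1 + 1) : MvPolynomial (Fin 2) ℝ) f).totalDegree
      ≤ f.natDegree := by
  set s : MvPolynomial (Fin 2) ℝ := X 0 - MvPolynomial.C ν * (X 1 + 1) with hs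
  have hst : s.totalDegree ≤ 1 := by
    rw [hs, sub_eq_add_neg]
    refine le_trans (totalDegree_add _ _) (max_le (by simp) ?_)
    rw [totalDegree_neg]
    refine le_trans (totalDegree_mul _ _) ?_
    simp only [totalDegree_C, zero_add]
    exact le_trans (totalDegree_add _ _) (by simp)
  rw [Polynomial.aeval_def, Polynomial.eval₂_eq_sum, Polynomial.sum_def]
  refine totalDegree_finsetSum_le fun n hn => ?_
  refine le_trans (totalDegree_mul _ _) ?_
  rw [MvPolynomial.algebraMap_eq, totalDegree_C, zero_add]
  calc (s ^ n).totalDegree ≤ n * s.totalDegree := totalDegree_pow _ _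
    _ ≤ n * 1 := Nat.mul_le_mul_left _ hst
    _ ≤ f.natDegree := by simpa using Polynomial.le_natDegree_of_mem_supp n hn

lemma interp {p : ℕ} (ξ : Fin (p + 1) → ℝ) (hmono : StrictMono ξ)
    (g : Polynomial ℝ) (hg : g.natDegree ≤ p)
    (l : Fin (p + 1) → Polynomial ℝ) (hl_deg : ∀ i, (l i).natDegree = p)
    (hl_eval : ∀ i j, (l i).eval (ξ j) = if i = j then 1 else 0) :
    ∑ i, Polynomial.C (g.eval (ξ i)) * l i = g := by
  have h : (∑ i, Polynomial.C (g.eval (ξ i)) * l i) - g = 0 := by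
    apply Polynomial.eq_zero_of_natDegree_lt_card_of_eval_eq_zero _ hmono.injective
    · intro j
      simp [Polynomial.eval_finset_sum, hl_eval, mul_ite, Finset.sum_ite_eq]
    · refine lt_of_le_of_lt (Polynomial.natDegree_sub_le _ _) ?_
      have h1 : (∑ i, Polynomial.C (g.eval (ξ i)) * l i).natDegree ≤ p :=
        Polynomial.natDegree_sum_le_of_forall_le _ _ fun i _ =>
          le_trans (Polynomial.natDegree_C_mul_le _ _) (le_of_eq (hl_deg i))
      simpa [Fintype.card_fin] using Nat.lt_succ_of_le (max_le h1 hg)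
  exact sub_eq_zero.mp h

/-- the exact local predictor.
Let `g` be of degree `≤ p`, let `ν ∈ ℝ`, and let `l i` be the Lagrange basis polynomials
for the nodes `ξ 0, …, ξ p` (so `l i` has degree `p` and `l i (ξ j) = δ_{ij}`).  Define
`q̃(ξ, τ) := ∑ i, g(ξ i) · l i (ξ − ν(τ+1))`.  Then `q̃ ∈ V_p`, `q̃(ξ, −1) = g(ξ)` for all
`ξ`, and `q̃` satisfies the predictor equation with data `g`: the predictor recovers the
previous solution at the beginning of the time step. -/
theorem predictor_recovers_initial_data
    (p : ℕ) (hp : 1 ≤ p)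
    (ξ w : Fin (p + 1) → ℝ)
    (hmono : StrictMono ξ)
    (hξ0 : ξ 0 = -1) (hξlast : ξ (Fin.last p) = 1)
    (hw : ∀ i, 0 < w i)
    (hquad : ∀ f : Polynomial ℝ, f.natDegree ≤ 2 * p - 1 →
      ∑ i, w i * f.eval (ξ i) = ∫ x in (-1 : ℝ)..1, f.eval x)
    (g : Polynomial ℝ) (hg : g.natDegree ≤ p) (ν : ℝ)
    (l : Fin (p + 1) → Polynomial ℝ)
    (hl_deg : ∀ i, (l i).natDegree = p)
    (hl_eval : ∀ i j, (l i).eval (ξ j) = if i = j then 1 else 0)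
    (qt : MvPolynomial (Fin 2) ℝ)
    (hqt : qt = ∑ i, MvPolynomial.C (g.eval (ξ i)) *
      Polynomial.aeval (X 0 - MvPolynomial.C ν * (X 1 + 1) : MvPolynomial (Fin 2) ℝ) (l i)) :
    qt ∈ Vp p ∧ (∀ x : ℝ, ev qt x (-1) = g.eval x) ∧ PredictorEq ξ w ν g qt := by
    classical
  set s : MvPolynomial (Fin 2) ℝ := X 0 - MvPolynomial.C ν * (X 1 + 1) with hs
  have hq : qt = Polynomial.aeval s g := by
    rw [hqt]
    conv_rhs => rw [← interp ξ hmono g hg l hl_deg hl_eval]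
    rw [map_sum]
    refine Finset.sum_congr rfl fun i _ => ?_
    rw [map_mul, Polynomial.aeval_C, MvPolynomial.algebraMap_eq]
  have hev : ∀ x t : ℝ, ev qt x t = g.eval (x - ν * (t + 1)) := by
    intro x t; rw [hq]; exact ev_aeval ν x t g
  have hz : pderiv 1 qt + MvPolynomial.C ν * pderiv 0 qt = 0 := by
    rw [hq]; exact pderiv_comb ν g
  have hcomb : ∀ x t : ℝ, ev (pderiv 1 qt) x t + ν * ev (pderiv 0 qt) x t = 0 := by
    intro x t
    have h := congrArg (fun Q => ev Q x t) hz
    simpa [ev] using h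
  have hevm1 : ∀ x : ℝ, ev qt x (-1) = g.eval x := by
    intro x; rw [hev]; norm_num
  refine ⟨⟨?_, ?_⟩, hevm1, ?_⟩
  · rw [hq]
    exact le_trans (degreeOf_le_totalDegree _ _) (le_trans (totalDeg_aeval_le ν g) hg)
  · rw [hq]
    exact le_trans (degreeOf_le_totalDegree _ _) (le_trans (totalDeg_aeval_le ν g) hg)
  · intro φ hφ
    have h1 : dVol ξ w (fun x t => ev φ x t *
        (ev (pderiv 1 qt) x t + ν * ev (pderiv 0 qt) x t)) = 0 := by
      unfold dVol
      refine Finset.sum_eq_zero fun i _ => Finset.sum_eq_zero fun j _ => ?_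
      simp only [hcomb, mul_zero]
    have h2 : dT ξ w (fun x t => ev φ x t * (ev qt x t - g.eval x)) (-1) = 0 := by
      unfold dT
      refine Finset.sum_eq_zero fun i _ => ?_
      simp only [hevm1, sub_self, mul_zero]
    rw [h1, h2, add_zero]
end

section
/- Let ν ∈ ℝ, let ψ ∈ V_p, and let r be a univariate real polynomial of degree ≤ p such that for every φ ∈ V_p: ⟨φ·∂ψ/∂τ⟩ + ν ⟨φ·∂ψ/∂ξ⟩ + ⟨φ·ψ⟩_{τ=−1} − ν ⟨φ·ψ⟩_{ξ=1} = ν ⟨φ·r⟩_{ξ=−1}, where r is evaluated in the τ variable. Then the following identity between discrete boundary integrals of ψ² holds: ν ⟨½ψ²⟩_{ξ=1} − ⟨½ψ²⟩_{τ=−1} = ⟨½ψ²⟩_{τ=1} − ν ⟨ψ·r⟩_{ξ=−1} − ν ⟨½ψ²⟩_{ξ=−1}. -/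
open BigOperators MvPolynomial

noncomputable def tr (g : Fin 2 → Polynomial ℝ) (ψ : MvPolynomial (Fin 2) ℝ) : Polynomial ℝ :=
  MvPolynomial.eval₂ (Polynomial.C : ℝ →+* Polynomial ℝ) g ψ

lemma tr_eval (g : Fin 2 → Polynomial ℝ) (ψ : MvPolynomial (Fin 2) ℝ) (t : ℝ) :
    (tr g ψ).eval t = MvPolynomial.eval (fun i => (g i).eval t) ψ := by
  unfold tr
  rw [show (Polynomial.eval t (MvPolynomial.eval₂ Polynomial.C g ψ)) =
    (Polynomial.evalRingHom t) (MvPolynomial.eval₂ Polynomial.C g ψ) from rfl,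
    MvPolynomial.eval₂_comp_left,
    show (Polynomial.evalRingHom t).comp Polynomial.C = RingHom.id ℝ from by ext; simp]
  rfl

lemma tr_deriv (g : Fin 2 → Polynomial ℝ) (k : Fin 2)
    (hg : ∀ i, Polynomial.derivative (g i) = if i = k then 1 else 0)
    (ψ : MvPolynomial (Fin 2) ℝ) :
    Polynomial.derivative (tr g ψ) = tr g (pderiv k ψ) := by
  induction ψ using MvPolynomial.induction_on with
  | C a => simp [tr]
  | add p q hp hq =>
    simp only [tr, MvPolynomial.eval₂_add, map_add] at *
    rw [hp, hq]
  | mul_X p i hp =>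
    simp only [tr, MvPolynomial.eval₂_mul, MvPolynomial.eval₂_X, Polynomial.derivative_mul,
      map_mul, pderiv_mul, pderiv_X, map_add]
    rw [show Polynomial.derivative (MvPolynomial.eval₂ Polynomial.C g p) = tr g (pderiv k p) from hp]
    simp [tr, hg i, Pi.single_apply]
    by_cases h : i = k <;> simp [h]

lemma tr_natDegree_le (g : Fin 2 → Polynomial ℝ) (k : Fin 2)
    (hg : ∀ i, (g i).natDegree ≤ if i = k then 1 else 0)
    (ψ : MvPolynomial (Fin 2) ℝ) :
    (tr g ψ).natDegree ≤ ψ.degreeOf k := by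
  unfold tr
  rw [MvPolynomial.eval₂_eq]
  apply Polynomial.natDegree_sum_le_of_forall_le
  intro d hd
  calc (Polynomial.C (MvPolynomial.coeff d ψ) * ∏ i ∈ d.support, g i ^ d i).natDegree
      ≤ (Polynomial.C (MvPolynomial.coeff d ψ)).natDegree
          + (∏ i ∈ d.support, g i ^ d i).natDegree :=
        Polynomial.natDegree_mul_le
    _ ≤ 0 + ∑ i ∈ d.support, (g i ^ d i).natDegree := by
        gcongr
        · simp
        · exact Polynomial.natDegree_prod_le _ _
    _ ≤ ∑ i ∈ d.support, d i * (g i).natDegree := by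
        simp only [zero_add]
        gcongr with i
        exact Polynomial.natDegree_pow_le
    _ ≤ ∑ i, d i * (g i).natDegree :=
        Finset.sum_le_sum_of_subset (Finset.subset_univ _)
    _ ≤ d k := by
        rw [Fin.sum_univ_two]
        have h0 := hg 0
        have h1 := hg 1
        fin_cases k <;> simp_all <;> nlinarith [Nat.zero_le (d 0), Nat.zero_le (d 1)]
    _ ≤ ψ.degreeOf k := MvPolynomial.monomial_le_degreeOf k hd

lemma quad_step {p : ℕ} (hp : 1 ≤ p) (ξ w : Fin (p + 1) → ℝ)
    (hquad : ∀ f : Polynomial ℝ, f.natDegree ≤ 2 * p - 1 →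
      ∑ i, w i * f.eval (ξ i) = ∫ x in (-1 : ℝ)..1, f.eval x)
    (P : Polynomial ℝ) (hP : P.natDegree ≤ p) :
    ∑ j, w j * (P.eval (ξ j) * (Polynomial.derivative P).eval (ξ j))
      = 1 / 2 * P.eval 1 ^ 2 - 1 / 2 * P.eval (-1) ^ 2 := by
  have hdeg : (P * Polynomial.derivative P).natDegree ≤ 2 * p - 1 := by
    refine le_trans Polynomial.natDegree_mul_le ?_
    have h1 : (Polynomial.derivative P).natDegree ≤ P.natDegree - 1 :=
      Polynomial.natDegree_derivative_le P
    omega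
  have h := hquad (P * Polynomial.derivative P) hdeg
  simp only [Polynomial.eval_mul] at h
  rw [h]
  have hint : ∫ x in (-1 : ℝ)..1, P.eval x * (Polynomial.derivative P).eval x
      = (1 / 2 * P.eval 1 ^ 2) - (1 / 2 * P.eval (-1) ^ 2) := by
    have hder : ∀ x ∈ Set.uIcc (-1 : ℝ) 1,
        HasDerivAt (fun y => 1 / 2 * P.eval y ^ 2)
          (P.eval x * (Polynomial.derivative P).eval x) x := by
      intro x _
      have h1 : HasDerivAt (fun y => P.eval y) ((Polynomial.derivative P).eval x) x :=
        P.hasDerivAt x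
      have h2 := (h1.pow 2).const_mul (1 / 2 : ℝ)
      exact h2.congr_deriv (by norm_num; ring)
    have hcont : IntervalIntegrable
        (fun x => P.eval x * (Polynomial.derivative P).eval x) MeasureTheory.volume (-1) 1 :=
      (P.continuous_aeval.mul (Polynomial.derivative P).continuous_aeval).intervalIntegrable _ _
    exact intervalIntegral.integral_eq_sub_of_hasDerivAt hder hcont
  rw [hint]

section MainAux

lemma traceT_eval (ψ : MvPolynomial (Fin 2) ℝ) (x t : ℝ) :
    (tr ![Polynomial.C x, Polynomial.X] ψ).eval t = ev ψ x t := by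
  rw [tr_eval]
  unfold ev
  have h : (fun i => Polynomial.eval t (![Polynomial.C x, Polynomial.X] i)) = ![x, t] := by
    funext i
    fin_cases i <;> simp
  rw [h]

lemma traceT_deriv_eval (ψ : MvPolynomial (Fin 2) ℝ) (x t : ℝ) :
    (Polynomial.derivative (tr ![Polynomial.C x, Polynomial.X] ψ)).eval t
      = ev (pderiv 1 ψ) x t := by
  rw [tr_deriv _ 1 (by intro i; fin_cases i <;> simp), traceT_eval]

lemma traceT_natDegree (ψ : MvPolynomial (Fin 2) ℝ) (x : ℝ) :
    (tr ![Polynomial.C x, Polynomial.X] ψ).natDegree ≤ ψ.degreeOf 1 :=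
  tr_natDegree_le _ 1 (by intro i; fin_cases i <;> simp) ψ

lemma traceX_eval (ψ : MvPolynomial (Fin 2) ℝ) (x t : ℝ) :
    (tr ![Polynomial.X, Polynomial.C t] ψ).eval x = ev ψ x t := by
  rw [tr_eval]
  unfold ev
  have h : (fun i => Polynomial.eval x (![Polynomial.X, Polynomial.C t] i)) = ![x, t] := by
    funext i
    fin_cases i <;> simp
  rw [h]

lemma traceX_deriv_eval (ψ : MvPolynomial (Fin 2) ℝ) (x t : ℝ) :
    (Polynomial.derivative (tr ![Polynomial.X, Polynomial.C t] ψ)).eval x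
      = ev (pderiv 0 ψ) x t := by
  rw [tr_deriv _ 0 (by intro i; fin_cases i <;> simp), traceX_eval]

lemma traceX_natDegree (ψ : MvPolynomial (Fin 2) ℝ) (t : ℝ) :
    (tr ![Polynomial.X, Polynomial.C t] ψ).natDegree ≤ ψ.degreeOf 0 :=
  tr_natDegree_le _ 0 (by intro i; fin_cases i <;> simp) ψ

end MainAux


/-- Lemma 4.2: relation between boundary integrals of `ψ²`.
Let `ψ ∈ V_p` and let `r` be a univariate polynomial of degree `≤ p` such that for all
`φ ∈ V_p`:
`⟨φ·∂ψ/∂τ⟩ + ν ⟨φ·∂ψ/∂ξ⟩ + ⟨φ·ψ⟩_{τ=−1} − ν ⟨φ·ψ⟩_{ξ=1} = ν ⟨φ·r⟩_{ξ=−1}`.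
Then
`ν ⟨½ψ²⟩_{ξ=1} − ⟨½ψ²⟩_{τ=−1} = ⟨½ψ²⟩_{τ=1} − ν ⟨ψ·r⟩_{ξ=−1} − ν ⟨½ψ²⟩_{ξ=−1}`. -/
theorem boundary_integral_identity
    (p : ℕ) (hp : 1 ≤ p)
    (ξ w : Fin (p + 1) → ℝ)
    (hmono : StrictMono ξ)
    (hξ0 : ξ 0 = -1) (hξlast : ξ (Fin.last p) = 1)
    (hw : ∀ i, 0 < w i)
    (hquad : ∀ f : Polynomial ℝ, f.natDegree ≤ 2 * p - 1 →
      ∑ i, w i * f.eval (ξ i) = ∫ x in (-1 : ℝ)..1, f.eval x)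
    (ν : ℝ)
    (ψ : MvPolynomial (Fin 2) ℝ) (hψV : ψ ∈ Vp p)
    (r : Polynomial ℝ) (hr : r.natDegree ≤ p)
    (hψ : ∀ φ ∈ Vp p,
      dVol ξ w (fun x t => ev φ x t * ev (pderiv 1 ψ) x t) +
        ν * dVol ξ w (fun x t => ev φ x t * ev (pderiv 0 ψ) x t) +
        dT ξ w (fun x t => ev φ x t * ev ψ x t) (-1) -
        ν * dX ξ w (fun x t => ev φ x t * ev ψ x t) 1
      = ν * dX ξ w (fun x t => ev φ x t * r.eval t) (-1)) :
    ν * dX ξ w (fun x t => 1 / 2 * (ev ψ x t) ^ 2) 1 -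
        dT ξ w (fun x t => 1 / 2 * (ev ψ x t) ^ 2) (-1)
      = dT ξ w (fun x t => 1 / 2 * (ev ψ x t) ^ 2) 1 -
          ν * dX ξ w (fun x t => ev ψ x t * r.eval t) (-1) -
          ν * dX ξ w (fun x t => 1 / 2 * (ev ψ x t) ^ 2) (-1) := by
  have key := hψ ψ hψV
  have hT : dVol ξ w (fun x t => ev ψ x t * ev (pderiv 1 ψ) x t)
      = dT ξ w (fun x t => 1 / 2 * (ev ψ x t) ^ 2) 1
        - dT ξ w (fun x t => 1 / 2 * (ev ψ x t) ^ 2) (-1) := by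
    unfold dVol dT
    rw [← Finset.sum_sub_distrib]
    refine Finset.sum_congr rfl fun i _ => ?_
    have hq := quad_step hp ξ w hquad (tr ![Polynomial.C (ξ i), Polynomial.X] ψ)
      (le_trans (traceT_natDegree ψ (ξ i)) hψV.2)
    calc ∑ j, w i * w j * (ev ψ (ξ i) (ξ j) * ev (pderiv 1 ψ) (ξ i) (ξ j))
        = w i * ∑ j, w j * ((tr ![Polynomial.C (ξ i), Polynomial.X] ψ).eval (ξ j) *
            (Polynomial.derivative (tr ![Polynomial.C (ξ i), Polynomial.X] ψ)).eval (ξ j)) := by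
          rw [Finset.mul_sum]
          refine Finset.sum_congr rfl fun j _ => ?_
          rw [traceT_eval, traceT_deriv_eval]
          ring
      _ = w i * (1 / 2 * (ev ψ (ξ i) 1) ^ 2) - w i * (1 / 2 * (ev ψ (ξ i) (-1)) ^ 2) := by
          rw [hq, traceT_eval, traceT_eval]
          ring
  have hX : dVol ξ w (fun x t => ev ψ x t * ev (pderiv 0 ψ) x t)
      = dX ξ w (fun x t => 1 / 2 * (ev ψ x t) ^ 2) 1
        - dX ξ w (fun x t => 1 / 2 * (ev ψ x t) ^ 2) (-1) := by
    unfold dVol dX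
    rw [Finset.sum_comm, ← Finset.sum_sub_distrib]
    refine Finset.sum_congr rfl fun j _ => ?_
    have hq := quad_step hp ξ w hquad (tr ![Polynomial.X, Polynomial.C (ξ j)] ψ)
      (le_trans (traceX_natDegree ψ (ξ j)) hψV.1)
    calc ∑ i, w i * w j * (ev ψ (ξ i) (ξ j) * ev (pderiv 0 ψ) (ξ i) (ξ j))
        = w j * ∑ i, w i * ((tr ![Polynomial.X, Polynomial.C (ξ j)] ψ).eval (ξ i) *
            (Polynomial.derivative (tr ![Polynomial.X, Polynomial.C (ξ j)] ψ)).eval (ξ i)) := by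
          rw [Finset.mul_sum]
          refine Finset.sum_congr rfl fun i _ => ?_
          rw [traceX_eval, traceX_deriv_eval]
          ring
      _ = w j * (1 / 2 * (ev ψ 1 (ξ j)) ^ 2) - w j * (1 / 2 * (ev ψ (-1) (ξ j)) ^ 2) := by
          rw [hq, traceX_eval, traceX_eval]
          ring
  have h2T : dT ξ w (fun x t => ev ψ x t * ev ψ x t) (-1)
      = 2 * dT ξ w (fun x t => 1 / 2 * (ev ψ x t) ^ 2) (-1) := by
    unfold dT
    rw [Finset.mul_sum]
    exact Finset.sum_congr rfl fun i _ => by ring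
  have h2X : dX ξ w (fun x t => ev ψ x t * ev ψ x t) 1
      = 2 * dX ξ w (fun x t => 1 / 2 * (ev ψ x t) ^ 2) 1 := by
    unfold dX
    rw [Finset.mul_sum]
    exact Finset.sum_congr rfl fun j _ => by ring
  rw [hT, hX, h2T, h2X] at key
  linarith
end

section
/- Let ν ∈ ℝ, let g be a univariate real polynomial of degree ≤ p, let a, b be univariate real polynomials of degree ≤ p, and let q ∈ V_p satisfy the corrector equation with data g, left-flux trace a and right-flux trace b. Then the per-element energy identity holds: ∑_{i=0}^{p} w_i ½ q(ξ_i, 1)² − ∑_{i=0}^{p} w_i ½ g(ξ_i)² = ν ∑_{j=0}^{p} w_j [(½ q(1, ξ_j)² − q(1, ξ_j) b(ξ_j)) − (½ q(−1, ξ_j)² − q(−1, ξ_j) a(ξ_j))] − ∑_{i=0}^{p} w_i ½ (q(ξ_i, −1) − g(ξ_i))². -/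
open BigOperators MvPolynomial

section Aux

lemma ftc_poly (P : Polynomial ℝ) :
    ∫ x in (-1:ℝ)..1, (P * P.derivative).eval x
      = 1/2 * (P.eval 1)^2 - 1/2 * (P.eval (-1))^2 := by
  have h : ∀ x ∈ Set.uIcc (-1:ℝ) (1:ℝ),
      HasDerivAt (fun y => 1/2 * (P.eval y)^2) ((P * P.derivative).eval x) x := by
    intro x _
    have h2 := ((P.hasDerivAt x).fun_pow 2).const_mul (1/2 : ℝ)
    refine h2.congr_deriv ?_
    simp [Polynomial.eval_mul]
    ring
  rw [intervalIntegral.integral_eq_sub_of_hasDerivAt h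
    ((Polynomial.continuous _).intervalIntegrable _ _)]

lemma deriv_eval2 (k : Fin 2) (s : Fin 2 → Polynomial ℝ)
    (hs : ∀ i, (s i).derivative = if i = k then 1 else 0)
    (Q : MvPolynomial (Fin 2) ℝ) :
    (MvPolynomial.eval₂ Polynomial.C s Q).derivative
      = MvPolynomial.eval₂ Polynomial.C s (pderiv k Q) := by
  induction Q using MvPolynomial.induction_on with
  | C a => simp
  | add f g hf hg => simp [hf, hg]
  | mul_X f i hf =>
    rw [MvPolynomial.eval₂_mul, MvPolynomial.eval₂_X, Polynomial.derivative_mul, hf, hs,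
      pderiv_mul, pderiv_X, MvPolynomial.eval₂_add, MvPolynomial.eval₂_mul, MvPolynomial.eval₂_mul,
      MvPolynomial.eval₂_X]
    by_cases h : i = k <;> simp [h, Pi.single_apply, MvPolynomial.eval₂_C]

lemma natDegree_eval2_le (k : Fin 2) (s : Fin 2 → Polynomial ℝ)
    (hs : ∀ i, (s i).natDegree ≤ if i = k then 1 else 0)
    (Q : MvPolynomial (Fin 2) ℝ) :
    (MvPolynomial.eval₂ Polynomial.C s Q).natDegree ≤ Q.degreeOf k := by
  rw [MvPolynomial.eval₂_eq]
  apply Polynomial.natDegree_sum_le_of_forall_le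
  intro d hd
  have h1 : (∏ i ∈ d.support, s i ^ d i).natDegree ≤ d k := by
    refine (Polynomial.natDegree_prod_le _ _).trans ?_
    have hb : ∀ i ∈ d.support, (s i ^ d i).natDegree ≤ if i = k then d i else 0 := by
      intro i _
      refine Polynomial.natDegree_pow_le.trans ?_
      by_cases h : i = k
      · have : (s i).natDegree ≤ 1 := by simpa [h] using hs i
        calc d i * (s i).natDegree ≤ d i * 1 := Nat.mul_le_mul le_rfl this
          _ = if i = k then d i else 0 := by simp [h]
      · have : (s i).natDegree = 0 := by simpa [h] using Nat.le_zero.mp (by simpa [h] using hs i)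
        simp [h, this]
    refine (Finset.sum_le_sum hb).trans ?_
    rw [Finset.sum_ite_eq' d.support k fun i => d i]
    split <;> simp
  calc (Polynomial.C (MvPolynomial.coeff d Q) * ∏ i ∈ d.support, s i ^ d i).natDegree
      ≤ _ + _ := Polynomial.natDegree_mul_le
    _ ≤ d k := by simpa using h1
    _ ≤ Q.degreeOf k := by
        rw [MvPolynomial.degreeOf_eq_sup]
        exact Finset.le_sup (f := fun m => m k) hd

lemma eval_restrict (s : Fin 2 → Polynomial ℝ) (v : ℝ) (Q : MvPolynomial (Fin 2) ℝ) :
    (MvPolynomial.eval₂ Polynomial.C s Q).eval v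
      = MvPolynomial.eval (fun i => (s i).eval v) Q := by
  induction Q using MvPolynomial.induction_on with
  | C a => simp
  | add f g hf hg => simp [MvPolynomial.eval₂_add, hf, hg]
  | mul_X f i hf => simp [MvPolynomial.eval₂_mul, hf]


lemma eval_fn_congr (f g : Fin 2 → ℝ) (Q : MvPolynomial (Fin 2) ℝ)
    (h0 : f 0 = g 0) (h1 : f 1 = g 1) : MvPolynomial.eval f Q = MvPolynomial.eval g Q := by
  have : f = g := funext fun i => by fin_cases i <;> assumption
  rw [this]

/-- quadrature energy lemma -/
lemma quad_energy {p : ℕ} (hp : 1 ≤ p) (ξ w : Fin (p + 1) → ℝ)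
    (hquad : ∀ f : Polynomial ℝ, f.natDegree ≤ 2 * p - 1 →
      ∑ i, w i * f.eval (ξ i) = ∫ x in (-1 : ℝ)..1, f.eval x)
    (P : Polynomial ℝ) (hP : P.natDegree ≤ p) :
    ∑ j, w j * ((P * P.derivative).eval (ξ j))
      = 1/2 * (P.eval 1)^2 - 1/2 * (P.eval (-1))^2 := by
  rw [hquad _ ?_, ftc_poly]
  refine Polynomial.natDegree_mul_le.trans ?_
  have h1 : P.derivative.natDegree ≤ p - 1 :=
    (Polynomial.natDegree_derivative_le P).trans (by omega)
  omega

end Aux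

/-- per-element energy identity of the corrector step.
Let `q ∈ V_p` satisfy the corrector equation with data `g`, left-flux trace `a` and
right-flux trace `b` (all of degree `≤ p`).  Then
`∑ i, w i ½ q(ξ i, 1)² − ∑ i, w i ½ g(ξ i)²`
`= ν ∑ j, w j [(½ q(1, ξ j)² − q(1, ξ j) b(ξ j)) − (½ q(−1, ξ j)² − q(−1, ξ j) a(ξ j))]`
`− ∑ i, w i ½ (q(ξ i, −1) − g(ξ i))²`. -/
theorem per_element_energy_identity
    (p : ℕ) (hp : 1 ≤ p)
    (ξ w : Fin (p + 1) → ℝ)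
    (hmono : StrictMono ξ)
    (hξ0 : ξ 0 = -1) (hξlast : ξ (Fin.last p) = 1)
    (hw : ∀ i, 0 < w i)
    (hquad : ∀ f : Polynomial ℝ, f.natDegree ≤ 2 * p - 1 →
      ∑ i, w i * f.eval (ξ i) = ∫ x in (-1 : ℝ)..1, f.eval x)
    (ν : ℝ) (g : Polynomial ℝ) (hg : g.natDegree ≤ p)
    (a b : Polynomial ℝ) (ha : a.natDegree ≤ p) (hb : b.natDegree ≤ p)
    (q : MvPolynomial (Fin 2) ℝ) (hqV : q ∈ Vp p)
    (hcor : CorrectorEq ξ w ν g a b q) :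
    ∑ i, w i * (1 / 2 * (ev q (ξ i) 1) ^ 2) - ∑ i, w i * (1 / 2 * (g.eval (ξ i)) ^ 2)
      = ν * ∑ j, w j *
          ((1 / 2 * (ev q 1 (ξ j)) ^ 2 - ev q 1 (ξ j) * b.eval (ξ j)) -
            (1 / 2 * (ev q (-1) (ξ j)) ^ 2 - ev q (-1) (ξ j) * a.eval (ξ j)))
        - ∑ i, w i * (1 / 2 * (ev q (ξ i) (-1) - g.eval (ξ i)) ^ 2) := by
  obtain ⟨hq0, hq1⟩ := hqV
  -- restriction polynomials
  set PT : ℝ → Polynomial ℝ := fun x =>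
    MvPolynomial.eval₂ Polynomial.C ![Polynomial.C x, Polynomial.X] q with hPT
  set PX : ℝ → Polynomial ℝ := fun t =>
    MvPolynomial.eval₂ Polynomial.C ![Polynomial.X, Polynomial.C t] q with hPX
  have hsT : ∀ x : ℝ, ∀ t : ℝ, (PT x).eval t = ev q x t := by
    intro x t
    rw [hPT, eval_restrict, ev]
    exact eval_fn_congr _ _ _ (by simp) (by simp)
  have hsX : ∀ t : ℝ, ∀ x : ℝ, (PX t).eval x = ev q x t := by
    intro t x
    rw [hPX, eval_restrict, ev]
    exact eval_fn_congr _ _ _ (by simp) (by simp)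
  have hdT : ∀ x : ℝ, ∀ t : ℝ, (PT x).derivative.eval t = ev (pderiv 1 q) x t := by
    intro x t
    rw [hPT]
    rw [deriv_eval2 1 _ (by intro i; fin_cases i <;> simp)]
    rw [eval_restrict, ev]
    exact eval_fn_congr _ _ _ (by simp) (by simp)
  have hdX : ∀ t : ℝ, ∀ x : ℝ, (PX t).derivative.eval x = ev (pderiv 0 q) x t := by
    intro t x
    rw [hPX]
    rw [deriv_eval2 0 _ (by intro i; fin_cases i <;> simp)]
    rw [eval_restrict, ev]
    exact eval_fn_congr _ _ _ (by simp) (by simp)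
  have hdegT : ∀ x : ℝ, (PT x).natDegree ≤ p := by
    intro x
    refine (natDegree_eval2_le 1 _ ?_ q).trans hq1
    intro i; fin_cases i <;> simp
  have hdegX : ∀ t : ℝ, (PX t).natDegree ≤ p := by
    intro t
    refine (natDegree_eval2_le 0 _ ?_ q).trans hq0
    intro i; fin_cases i <;> simp
  -- temporal per-row quadrature identity
  have htime : ∀ x : ℝ, ∑ j, w j * (ev q x (ξ j) * ev (pderiv 1 q) x (ξ j))
      = 1/2 * (ev q x 1)^2 - 1/2 * (ev q x (-1))^2 := by
    intro x
    have := quad_energy hp ξ w hquad (PT x) (hdegT x)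
    simpa [Polynomial.eval_mul, hsT, hdT] using this
  have hspace : ∀ t : ℝ, ∑ i, w i * (ev q (ξ i) t * ev (pderiv 0 q) (ξ i) t)
      = 1/2 * (ev q 1 t)^2 - 1/2 * (ev q (-1) t)^2 := by
    intro t
    have := quad_energy hp ξ w hquad (PX t) (hdegX t)
    simpa [Polynomial.eval_mul, hsX, hdX] using this
  -- the corrector equation with φ = q
  have hc := hcor q ⟨hq0, hq1⟩
  rw [dVol, dT, dX, dX] at hc
  -- split the volume term
  have hvol : (∑ i, ∑ j, w i * w j * (ev q (ξ i) (ξ j) *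
        (ev (pderiv 1 q) (ξ i) (ξ j) + ν * ev (pderiv 0 q) (ξ i) (ξ j))))
      = ∑ i, w i * (1/2 * (ev q (ξ i) 1)^2 - 1/2 * (ev q (ξ i) (-1))^2)
        + ν * ∑ j, w j * (1/2 * (ev q 1 (ξ j))^2 - 1/2 * (ev q (-1) (ξ j))^2) := by
    have step : ∀ i j, w i * w j * (ev q (ξ i) (ξ j) *
          (ev (pderiv 1 q) (ξ i) (ξ j) + ν * ev (pderiv 0 q) (ξ i) (ξ j)))
        = w i * (w j * (ev q (ξ i) (ξ j) * ev (pderiv 1 q) (ξ i) (ξ j)))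
          + ν * (w j * (w i * (ev q (ξ i) (ξ j) * ev (pderiv 0 q) (ξ i) (ξ j)))) := by
      intro i j; ring
    calc (∑ i, ∑ j, w i * w j * (ev q (ξ i) (ξ j) *
          (ev (pderiv 1 q) (ξ i) (ξ j) + ν * ev (pderiv 0 q) (ξ i) (ξ j))))
        = ∑ i, ((w i * ∑ j, w j * (ev q (ξ i) (ξ j) * ev (pderiv 1 q) (ξ i) (ξ j)))
            + ν * ∑ j, (w j * (w i * (ev q (ξ i) (ξ j) * ev (pderiv 0 q) (ξ i) (ξ j))))) := by
          refine Finset.sum_congr rfl fun i _ => ?_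
          rw [Finset.mul_sum, Finset.mul_sum, ← Finset.sum_add_distrib]
          exact Finset.sum_congr rfl fun j _ => step i j
      _ = (∑ i, w i * (1/2 * (ev q (ξ i) 1)^2 - 1/2 * (ev q (ξ i) (-1))^2))
            + ∑ i, ν * ∑ j, (w j * (w i * (ev q (ξ i) (ξ j) * ev (pderiv 0 q) (ξ i) (ξ j)))) := by
          rw [Finset.sum_add_distrib]
          congr 1
          exact Finset.sum_congr rfl fun i _ => by rw [htime (ξ i)]
      _ = (∑ i, w i * (1/2 * (ev q (ξ i) 1)^2 - 1/2 * (ev q (ξ i) (-1))^2))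
            + ν * ∑ j, w j * (1/2 * (ev q 1 (ξ j))^2 - 1/2 * (ev q (-1) (ξ j))^2) := by
          congr 1
          rw [← Finset.mul_sum]
          congr 1
          rw [Finset.sum_comm]
          refine Finset.sum_congr rfl fun j _ => ?_
          rw [← Finset.mul_sum, hspace (ξ j)]
  rw [hvol] at hc
  -- now hc is a purely algebraic statement about sums over Fin (p+1); finish by algebra
  rw [← sub_eq_zero]
  rw [← hc]
  simp only [Finset.mul_sum, ← Finset.sum_add_distrib, ← Finset.sum_sub_distrib]
  exact Finset.sum_congr rfl fun i _ => by ring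
end

section
/- Consider K ≥ 1 elements indexed by k ∈ ℤ/Kℤ (periodic), ν ∈ ℝ, univariate real polynomials g_k of degree ≤ p, arbitrary q̃_k ∈ V_p, and correctors q_k ∈ V_p each satisfying the corrector equation with data g_k, left-flux trace a_k(τ) = q̃_{k−1}(1, τ) and right-flux trace b_k(τ) = q̃_k(1, τ). Then ∑_{k} [∑_{i} w_i ½ q_k(ξ_i, 1)² − ∑_{i} w_i ½ g_k(ξ_i)²] = ∑_{k} [ν ∑_{j} w_j (½ (q_k(1, ξ_j) − q̃_k(1, ξ_j))² − ½ (q_k(−1, ξ_j) − q̃_{k−1}(1, ξ_j))²) − ∑_{i} w_i ½ (q_k(ξ_i, −1) − g_k(ξ_i))²]. -/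
open BigOperators MvPolynomial

/-! ### Auxiliary lemmas -/

/-- Trace of a bivariate polynomial at fixed space coordinate `ξ = c`, as a polynomial in `τ`. -/
noncomputable def tr1 (Q : MvPolynomial (Fin 2) ℝ) (c : ℝ) : Polynomial ℝ :=
  MvPolynomial.eval₂ Polynomial.C ![Polynomial.C c, Polynomial.X] Q

/-- Trace of a bivariate polynomial at fixed time coordinate `τ = c`, as a polynomial in `ξ`. -/
noncomputable def tr0 (Q : MvPolynomial (Fin 2) ℝ) (c : ℝ) : Polynomial ℝ :=
  MvPolynomial.eval₂ Polynomial.C ![Polynomial.X, Polynomial.C c] Q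

lemma eval_tr1 (Q : MvPolynomial (Fin 2) ℝ) (c t : ℝ) :
    (tr1 Q c).eval t = ev Q c t := by
  rw [tr1, ev, ← Polynomial.coe_evalRingHom,
    MvPolynomial.eval₂_comp_left (Polynomial.evalRingHom t)]
  have h1 : (Polynomial.evalRingHom t).comp Polynomial.C = RingHom.id ℝ := by
    ext r; simp
  rw [h1]
  rw [show (⇑(Polynomial.evalRingHom t) ∘ ![Polynomial.C c, Polynomial.X]) = ![c, t] by
    funext i; fin_cases i <;> simp]
  rw [MvPolynomial.eval₂_id]

lemma eval_tr0 (Q : MvPolynomial (Fin 2) ℝ) (c t : ℝ) :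
    (tr0 Q c).eval t = ev Q t c := by
  rw [tr0, ev, ← Polynomial.coe_evalRingHom,
    MvPolynomial.eval₂_comp_left (Polynomial.evalRingHom t)]
  have h1 : (Polynomial.evalRingHom t).comp Polynomial.C = RingHom.id ℝ := by
    ext r; simp
  rw [h1]
  rw [show (⇑(Polynomial.evalRingHom t) ∘ ![Polynomial.X, Polynomial.C c]) = ![t, c] by
    funext i; fin_cases i <;> simp]
  rw [MvPolynomial.eval₂_id]

lemma deriv_tr1 (Q : MvPolynomial (Fin 2) ℝ) (c : ℝ) :
    Polynomial.derivative (tr1 Q c) = tr1 (pderiv 1 Q) c := by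
  induction Q using MvPolynomial.induction_on with
  | C a => simp [tr1]
  | add P R hP hR => simp only [tr1, MvPolynomial.eval₂_add, map_add] at *; rw [hP, hR]
  | mul_X P n hP =>
      fin_cases n
      · simp only [tr1, MvPolynomial.eval₂_mul, MvPolynomial.eval₂_X, map_mul,
          Polynomial.derivative_mul, Polynomial.derivative_C, Polynomial.derivative_X,
          MvPolynomial.eval₂_add, Matrix.cons_val_zero, Matrix.cons_val_one, Matrix.head_cons,
          pderiv_mul, pderiv_X] at *
        rw [hP]
        simp
      · simp only [tr1, MvPolynomial.eval₂_mul, MvPolynomial.eval₂_X, map_mul,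
          Polynomial.derivative_mul, Polynomial.derivative_C, Polynomial.derivative_X,
          MvPolynomial.eval₂_add, Matrix.cons_val_zero, Matrix.cons_val_one, Matrix.head_cons,
          pderiv_mul, pderiv_X] at *
        rw [hP]
        simp

lemma deriv_tr0 (Q : MvPolynomial (Fin 2) ℝ) (c : ℝ) :
    Polynomial.derivative (tr0 Q c) = tr0 (pderiv 0 Q) c := by
  induction Q using MvPolynomial.induction_on with
  | C a => simp [tr0]
  | add P R hP hR => simp only [tr0, MvPolynomial.eval₂_add, map_add] at *; rw [hP, hR]
  | mul_X P n hP =>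
      fin_cases n
      · simp only [tr0, MvPolynomial.eval₂_mul, MvPolynomial.eval₂_X, map_mul,
          Polynomial.derivative_mul, Polynomial.derivative_C, Polynomial.derivative_X,
          MvPolynomial.eval₂_add, Matrix.cons_val_zero, Matrix.cons_val_one, Matrix.head_cons,
          pderiv_mul, pderiv_X] at *
        rw [hP]
        simp
      · simp only [tr0, MvPolynomial.eval₂_mul, MvPolynomial.eval₂_X, map_mul,
          Polynomial.derivative_mul, Polynomial.derivative_C, Polynomial.derivative_X,
          MvPolynomial.eval₂_add, Matrix.cons_val_zero, Matrix.cons_val_one, Matrix.head_cons,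
          pderiv_mul, pderiv_X] at *
        rw [hP]
        simp

lemma natDegree_tr1 (Q : MvPolynomial (Fin 2) ℝ) (c : ℝ) :
    (tr1 Q c).natDegree ≤ Q.degreeOf 1 := by
  rw [tr1, MvPolynomial.eval₂_eq]
  refine (Polynomial.natDegree_sum_le _ _).trans ?_
  rw [Finset.fold_max_le]
  refine ⟨Nat.zero_le _, fun d hd => ?_⟩
  refine le_trans ?_ (MvPolynomial.degreeOf_eq_sup 1 Q ▸ Finset.le_sup hd)
  refine (Polynomial.natDegree_C_mul_le _ _).trans ?_
  refine (Polynomial.natDegree_prod_le _ _).trans ?_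
  refine le_trans (Finset.sum_le_sum (g := fun i => if i = 1 then d 1 else 0)
    (fun i _ => ?_)) ?_
  · fin_cases i <;> simp [Polynomial.natDegree_X_pow]
  · refine (Finset.sum_le_sum_of_subset (Finset.subset_univ _)).trans ?_
    simp [Fin.sum_univ_two]

lemma natDegree_tr0 (Q : MvPolynomial (Fin 2) ℝ) (c : ℝ) :
    (tr0 Q c).natDegree ≤ Q.degreeOf 0 := by
  rw [tr0, MvPolynomial.eval₂_eq]
  refine (Polynomial.natDegree_sum_le _ _).trans ?_
  rw [Finset.fold_max_le]
  refine ⟨Nat.zero_le _, fun d hd => ?_⟩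
  refine le_trans ?_ (MvPolynomial.degreeOf_eq_sup 0 Q ▸ Finset.le_sup hd)
  refine (Polynomial.natDegree_C_mul_le _ _).trans ?_
  refine (Polynomial.natDegree_prod_le _ _).trans ?_
  refine le_trans (Finset.sum_le_sum (g := fun i => if i = 0 then d 0 else 0)
    (fun i _ => ?_)) ?_
  · fin_cases i <;> simp [Polynomial.natDegree_X_pow]
  · refine (Finset.sum_le_sum_of_subset (Finset.subset_univ _)).trans ?_
    simp [Fin.sum_univ_two]

lemma traceRight_eval (Q : MvPolynomial (Fin 2) ℝ) (t : ℝ) :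
    (traceRight Q).eval t = ev Q 1 t := by
  have h : traceRight Q = tr1 Q 1 := by
    rw [traceRight, tr1, Polynomial.C_1]
  rw [h, eval_tr1]

lemma integral_derivative (G : Polynomial ℝ) :
    ∫ x in (-1:ℝ)..1, (Polynomial.derivative G).eval x = G.eval 1 - G.eval (-1) :=
  intervalIntegral.integral_eq_sub_of_hasDerivAt
    (fun x _ => Polynomial.hasDerivAt G x)
    ((Polynomial.continuous _).intervalIntegrable _ _)

lemma quad_pp' {p : ℕ} (hp : 1 ≤ p) (ξ w : Fin (p+1) → ℝ)
    (hquad : ∀ f : Polynomial ℝ, f.natDegree ≤ 2*p - 1 →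
      ∑ i, w i * f.eval (ξ i) = ∫ x in (-1:ℝ)..1, f.eval x)
    (P : Polynomial ℝ) (hP : P.natDegree ≤ p) :
    ∑ j, w j * (P.eval (ξ j) * (Polynomial.derivative P).eval (ξ j))
      = 1/2 * P.eval 1 ^ 2 - 1/2 * P.eval (-1) ^ 2 := by
  have hdeg : (P * Polynomial.derivative P).natDegree ≤ 2*p - 1 := by
    refine (Polynomial.natDegree_mul_le).trans ?_
    have := Polynomial.natDegree_derivative_le P
    omega
  have h := hquad (P * Polynomial.derivative P) hdeg
  simp only [Polynomial.eval_mul] at h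
  rw [h]
  have hder : Polynomial.derivative (Polynomial.C (1/2:ℝ) * P^2)
      = P * Polynomial.derivative P := by
    rw [Polynomial.derivative_C_mul, Polynomial.derivative_pow]
    norm_num
    ring_nf
    rw [show Polynomial.C (1/2:ℝ) * Polynomial.C 2 * P * Polynomial.derivative P
      = (Polynomial.C (1/2:ℝ) * Polynomial.C (2:ℝ)) * (P * Polynomial.derivative P) from by ring,
      ← Polynomial.C_mul]
    norm_num
  have heq : ∀ x : ℝ, P.eval x * (Polynomial.derivative P).eval x
      = (Polynomial.derivative (Polynomial.C (1/2:ℝ) * P^2)).eval x := by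
    intro x; rw [hder, Polynomial.eval_mul]
  simp only [heq]
  rw [integral_derivative]
  simp [Polynomial.eval_mul, Polynomial.eval_pow]

lemma sum_split2 {n : ℕ} (w a b c : Fin n → ℝ) (h : ∀ i, a i = b i - c i) :
    ∑ i, w i * a i = ∑ i, w i * b i - ∑ i, w i * c i := by
  rw [← Finset.sum_sub_distrib]
  exact Finset.sum_congr rfl fun i _ => by rw [h i]; ring

lemma sum_split3 {n : ℕ} (w a b c d : Fin n → ℝ) (h : ∀ i, a i = b i - c i + d i) :
    ∑ i, w i * a i = ∑ i, w i * b i - ∑ i, w i * c i + ∑ i, w i * d i := by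
  rw [← Finset.sum_sub_distrib, ← Finset.sum_add_distrib]
  exact Finset.sum_congr rfl fun i _ => by rw [h i]; ring

lemma sum_split3' {n : ℕ} (w a b c d : Fin n → ℝ) (h : ∀ i, a i = b i - c i - d i) :
    ∑ i, w i * a i = ∑ i, w i * b i - ∑ i, w i * c i - ∑ i, w i * d i := by
  rw [← Finset.sum_sub_distrib, ← Finset.sum_sub_distrib]
  exact Finset.sum_congr rfl fun i _ => by rw [h i]; ring

lemma dvol_energy {p : ℕ} (hp : 1 ≤ p) (ξ w : Fin (p+1) → ℝ)
    (hquad : ∀ f : Polynomial ℝ, f.natDegree ≤ 2*p - 1 →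
      ∑ i, w i * f.eval (ξ i) = ∫ x in (-1:ℝ)..1, f.eval x)
    (ν : ℝ) (Q : MvPolynomial (Fin 2) ℝ) (hQ : Q ∈ Vp p) :
    ∑ i, ∑ j, w i * w j * (ev Q (ξ i) (ξ j) *
        (ev (pderiv 1 Q) (ξ i) (ξ j) + ν * ev (pderiv 0 Q) (ξ i) (ξ j)))
      = ((∑ i, w i * (1/2 * ev Q (ξ i) 1 ^ 2)) - ∑ i, w i * (1/2 * ev Q (ξ i) (-1) ^ 2))
        + ν * ((∑ j, w j * (1/2 * ev Q 1 (ξ j) ^ 2))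
            - ∑ j, w j * (1/2 * ev Q (-1) (ξ j) ^ 2)) := by
  have hτ : ∀ i, ∑ j, w j * (ev Q (ξ i) (ξ j) * ev (pderiv 1 Q) (ξ i) (ξ j))
      = 1/2 * ev Q (ξ i) 1 ^ 2 - 1/2 * ev Q (ξ i) (-1) ^ 2 := by
    intro i
    have h := quad_pp' hp ξ w hquad (tr1 Q (ξ i)) ((natDegree_tr1 Q (ξ i)).trans hQ.2)
    rw [deriv_tr1] at h
    simpa only [eval_tr1] using h
  have hξ' : ∀ j, ∑ i, w i * (ev Q (ξ i) (ξ j) * ev (pderiv 0 Q) (ξ i) (ξ j))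
      = 1/2 * ev Q 1 (ξ j) ^ 2 - 1/2 * ev Q (-1) (ξ j) ^ 2 := by
    intro j
    have h := quad_pp' hp ξ w hquad (tr0 Q (ξ j)) ((natDegree_tr0 Q (ξ j)).trans hQ.1)
    rw [deriv_tr0] at h
    simpa only [eval_tr0] using h
  have split : ∀ i j, w i * w j * (ev Q (ξ i) (ξ j) *
        (ev (pderiv 1 Q) (ξ i) (ξ j) + ν * ev (pderiv 0 Q) (ξ i) (ξ j)))
      = w i * (w j * (ev Q (ξ i) (ξ j) * ev (pderiv 1 Q) (ξ i) (ξ j)))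
        + ν * (w j * (w i * (ev Q (ξ i) (ξ j) * ev (pderiv 0 Q) (ξ i) (ξ j)))) :=
    fun i j => by ring
  simp only [split, Finset.sum_add_distrib]
  congr 1
  · rw [← Finset.sum_sub_distrib]
    refine Finset.sum_congr rfl fun i _ => ?_
    rw [← Finset.mul_sum, hτ i]; ring
  · rw [Finset.sum_comm]
    simp only [← Finset.mul_sum]
    congr 1
    rw [← Finset.sum_sub_distrib]
    refine Finset.sum_congr rfl fun j _ => ?_
    rw [hξ' j]; ring

/-- global energy identity for arbitrary predictors.
Consider `K ≥ 1` elements indexed by `k ∈ ℤ/Kℤ`, data `g k` of degree `≤ p`, arbitrary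
`q̃ k ∈ V_p` and correctors `q k ∈ V_p`, each satisfying the corrector equation with data
`g k`, left-flux trace `a k (τ) = q̃ (k−1) (1, τ)` and right-flux trace
`b k (τ) = q̃ k (1, τ)`.  Then
`∑ k [∑ i w i ½ (q k)(ξ i, 1)² − ∑ i w i ½ (g k)(ξ i)²]`
`= ∑ k [ν ∑ j w j (½ ((q k)(1, ξ j) − (q̃ k)(1, ξ j))² − ½ ((q k)(−1, ξ j) − (q̃ (k−1))(1, ξ j))²)`
`− ∑ i w i ½ ((q k)(ξ i, −1) − (g k)(ξ i))²]`. -/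
theorem global_energy_identity
    (p : ℕ) (hp : 1 ≤ p)
    (ξ w : Fin (p + 1) → ℝ)
    (hmono : StrictMono ξ)
    (hξ0 : ξ 0 = -1) (hξlast : ξ (Fin.last p) = 1)
    (hw : ∀ i, 0 < w i)
    (hquad : ∀ f : Polynomial ℝ, f.natDegree ≤ 2 * p - 1 →
      ∑ i, w i * f.eval (ξ i) = ∫ x in (-1 : ℝ)..1, f.eval x)
    (K : ℕ) (hK : 1 ≤ K) [NeZero K]
    (ν : ℝ)
    (g : ZMod K → Polynomial ℝ) (hg : ∀ k, (g k).natDegree ≤ p)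
    (qt : ZMod K → MvPolynomial (Fin 2) ℝ) (hqtV : ∀ k, qt k ∈ Vp p)
    (q : ZMod K → MvPolynomial (Fin 2) ℝ) (hqV : ∀ k, q k ∈ Vp p)
    (hcor : ∀ k, CorrectorEq ξ w ν (g k) (traceRight (qt (k - 1))) (traceRight (qt k)) (q k)) :
    ∑ k : ZMod K,
        (∑ i, w i * (1 / 2 * (ev (q k) (ξ i) 1) ^ 2) -
          ∑ i, w i * (1 / 2 * ((g k).eval (ξ i)) ^ 2))
      = ∑ k : ZMod K,
          (ν * ∑ j, w j *
              (1 / 2 * (ev (q k) 1 (ξ j) - ev (qt k) 1 (ξ j)) ^ 2 -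
                1 / 2 * (ev (q k) (-1) (ξ j) - ev (qt (k - 1)) 1 (ξ j)) ^ 2)
            - ∑ i, w i * (1 / 2 * (ev (q k) (ξ i) (-1) - (g k).eval (ξ i)) ^ 2)) := by
  have perk : ∀ k : ZMod K,
      (∑ i, w i * (1 / 2 * (ev (q k) (ξ i) 1) ^ 2) -
        ∑ i, w i * (1 / 2 * ((g k).eval (ξ i)) ^ 2))
      = (ν * ∑ j, w j *
            (1 / 2 * (ev (q k) 1 (ξ j) - ev (qt k) 1 (ξ j)) ^ 2 -
              1 / 2 * (ev (q k) (-1) (ξ j) - ev (qt (k - 1)) 1 (ξ j)) ^ 2)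
          - ∑ i, w i * (1 / 2 * (ev (q k) (ξ i) (-1) - (g k).eval (ξ i)) ^ 2))
        + ν * ((∑ j, w j * (1 / 2 * ev (qt (k - 1)) 1 (ξ j) ^ 2))
              - ∑ j, w j * (1 / 2 * ev (qt k) 1 (ξ j) ^ 2)) := by
    intro k
    have hk := hcor k (q k) (hqV k)
    simp only [dVol, dT, dX, traceRight_eval] at hk
    rw [dvol_energy hp ξ w hquad ν (q k) (hqV k)] at hk
    have e2 : ∑ i, w i * (ev (q k) (ξ i) (-1) * (ev (q k) (ξ i) (-1) - (g k).eval (ξ i)))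
        = ∑ i, w i * (1 / 2 * ev (q k) (ξ i) (-1) ^ 2)
          - ∑ i, w i * (1 / 2 * ((g k).eval (ξ i)) ^ 2)
          + ∑ i, w i * (1 / 2 * (ev (q k) (ξ i) (-1) - (g k).eval (ξ i)) ^ 2) :=
      sum_split3 _ _ _ _ _ (fun i => by ring)
    have e3 : ∑ j, w j * (ev (q k) 1 (ξ j) * (ev (qt k) 1 (ξ j) - ev (q k) 1 (ξ j)))
        = ∑ j, w j * (1 / 2 * ev (qt k) 1 (ξ j) ^ 2)
          - ∑ j, w j * (1 / 2 * ev (q k) 1 (ξ j) ^ 2)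
          - ∑ j, w j * (1 / 2 * (ev (q k) 1 (ξ j) - ev (qt k) 1 (ξ j)) ^ 2) :=
      sum_split3' _ _ _ _ _ (fun j => by ring)
    have e4 : ∑ j, w j * (ev (q k) (-1) (ξ j) *
          (ev (qt (k - 1)) 1 (ξ j) - ev (q k) (-1) (ξ j)))
        = ∑ j, w j * (1 / 2 * ev (qt (k - 1)) 1 (ξ j) ^ 2)
          - ∑ j, w j * (1 / 2 * ev (q k) (-1) (ξ j) ^ 2)
          - ∑ j, w j * (1 / 2 * (ev (q k) (-1) (ξ j) - ev (qt (k - 1)) 1 (ξ j)) ^ 2) :=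
      sum_split3' _ _ _ _ _ (fun j => by ring)
    have e0 : ∑ j, w j *
          (1 / 2 * (ev (q k) 1 (ξ j) - ev (qt k) 1 (ξ j)) ^ 2 -
            1 / 2 * (ev (q k) (-1) (ξ j) - ev (qt (k - 1)) 1 (ξ j)) ^ 2)
        = ∑ j, w j * (1 / 2 * (ev (q k) 1 (ξ j) - ev (qt k) 1 (ξ j)) ^ 2)
          - ∑ j, w j * (1 / 2 * (ev (q k) (-1) (ξ j) - ev (qt (k - 1)) 1 (ξ j)) ^ 2) :=
      sum_split2 _ _ _ _ (fun j => rfl)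
    rw [e2, e3, e4] at hk
    rw [e0]
    linear_combination hk
  have tele : ∑ k : ZMod K,
      ((∑ j, w j * (1 / 2 * ev (qt (k - 1)) 1 (ξ j) ^ 2))
        - ∑ j, w j * (1 / 2 * ev (qt k) 1 (ξ j) ^ 2)) = 0 := by
    rw [Finset.sum_sub_distrib]
    rw [show ∑ k : ZMod K, ∑ j, w j * (1 / 2 * ev (qt (k - 1)) 1 (ξ j) ^ 2)
        = ∑ k : ZMod K, ∑ j, w j * (1 / 2 * ev (qt k) 1 (ξ j) ^ 2) from
      Fintype.sum_equiv (Equiv.subRight (1 : ZMod K)) _ _ (fun k => by simp [Equiv.subRight])]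
    rw [sub_self]
  simp only [perk]
  rw [Finset.sum_add_distrib, ← Finset.mul_sum, tele, mul_zero, add_zero]
end

section
/- (Stability of the 1D locally implicit ADER-DG scheme.) Consider the periodic 1D scheme with K ≥ 1 elements, CFL number ν with 0 ≤ ν ≤ 1, and previous-step data g_k, with predictors q̃_k and correctors q_k; assume each predictor matches the previous solution at the beginning of the time step, i.e. q̃_k(ξ, −1) = g_k(ξ) for all ξ ∈ ℝ. For each k set ψ_k := q_k − q̃_k, and define vectors γ_k, β_k ∈ ℝ^{p+1} by (γ_k)_i = ψ_k(ξ_i, 1) and (β_k)_j = q̃_{k−1}(1, ξ_j) − q̃_k(−1, ξ_j). Suppose there exists a linear map A : ℝ^{p+1} → ℝ^{p+1} such that γ_k = ν A β_k for every k, and such that ‖A v‖_w ≤ ‖v‖_w for all v ∈ ℝ^{p+1}, where ‖v‖_w := (∑_{i=0}^{p} w_i v_i²)^{1/2} is the quadrature-weighted norm. Then the scheme is numerically stable: ∑_{k} ∑_{i} w_i ½ q_k(ξ_i, 1)² ≤ ∑_{k} ∑_{i} w_i ½ g_k(ξ_i)², i.e. the total discrete energy does not increase over the time step. -/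
open BigOperators MvPolynomial

noncomputable def slc (n : Fin 2) (c : ℝ) (Q : MvPolynomial (Fin 2) ℝ) : Polynomial ℝ :=
  MvPolynomial.eval₂ Polynomial.C (fun i => if i = n then Polynomial.X else Polynomial.C c) Q

lemma eval_eval₂_poly (b : Fin 2 → Polynomial ℝ) (Q : MvPolynomial (Fin 2) ℝ) (t : ℝ) :
    (MvPolynomial.eval₂ Polynomial.C b Q).eval t
      = MvPolynomial.eval (fun i => (b i).eval t) Q := by
  have h := MvPolynomial.eval₂_comp_left (Polynomial.evalRingHom t) Polynomial.C b Q
  simp only [Polynomial.coe_evalRingHom] at h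
  rw [h]
  have : (Polynomial.evalRingHom t).comp Polynomial.C = RingHom.id ℝ := by
    ext a; simp
  rw [this]
  rfl

lemma slcT_eval (c : ℝ) (Q : MvPolynomial (Fin 2) ℝ) (t : ℝ) :
    (slc 1 c Q).eval t = ev Q c t := by
  rw [slc, eval_eval₂_poly, ev]
  have : (fun i => Polynomial.eval t (if i = (1 : Fin 2) then Polynomial.X else Polynomial.C c)) = ![c, t] := by
    funext i; fin_cases i <;> simp
  rw [this]

lemma slcX_eval (c : ℝ) (Q : MvPolynomial (Fin 2) ℝ) (x : ℝ) :
    (slc 0 c Q).eval x = ev Q x c := by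
  rw [slc, eval_eval₂_poly, ev]
  have : (fun i => Polynomial.eval x (if i = (0 : Fin 2) then Polynomial.X else Polynomial.C c)) = ![x, c] := by
    funext i; fin_cases i <;> simp
  rw [this]

lemma slc_natDegree (n : Fin 2) (c : ℝ) (Q : MvPolynomial (Fin 2) ℝ) :
    (slc n c Q).natDegree ≤ Q.degreeOf n := by
  rw [slc, MvPolynomial.eval₂_eq]
  apply Polynomial.natDegree_sum_le_of_forall_le
  intro d hd
  have hdn : d n ≤ Q.degreeOf n := by
    rw [MvPolynomial.degreeOf_eq_sup]
    exact Finset.le_sup (f := fun m => m n) hd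
  refine le_trans (le_trans (Polynomial.natDegree_mul_le) ?_) hdn
  simp only [Polynomial.natDegree_C, zero_add]
  refine le_trans (Polynomial.natDegree_prod_le _ _) ?_
  have h1 : ∀ i ∈ d.support, ((if i = n then Polynomial.X else Polynomial.C c) ^ d i).natDegree
      ≤ if i = n then d n else 0 := by
    intro i _
    by_cases h : i = n
    · subst h; simp [Polynomial.natDegree_X_pow]
    · simp [h, Polynomial.natDegree_pow]
  refine le_trans (Finset.sum_le_sum h1) ?_
  rw [Finset.sum_ite_eq' d.support n (fun _ => d n)]
  split <;> simp

lemma slc_derivative (n : Fin 2) (c : ℝ) (Q : MvPolynomial (Fin 2) ℝ) :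
    Polynomial.derivative (slc n c Q) = slc n c (pderiv n Q) := by
  induction Q using MvPolynomial.induction_on with
  | C a => simp [slc]
  | add f g hf hg => simp only [slc, MvPolynomial.eval₂_add, map_add] at *; rw [hf, hg]
  | mul_X f i hf =>
    have hmul : ∀ (a b : MvPolynomial (Fin 2) ℝ), slc n c (a * b) = slc n c a * slc n c b :=
      fun a b => MvPolynomial.eval₂_mul _ _
    have hX : slc n c (X i) = if i = n then Polynomial.X else Polynomial.C c :=
      MvPolynomial.eval₂_X _ _ _
    rw [hmul, hX, pderiv_mul]
    by_cases h : i = n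
    · subst h
      rw [pderiv_X_self, mul_one]
      simp only [if_pos rfl, Polynomial.derivative_mul, Polynomial.derivative_X, mul_one]
      rw [show slc i c ((pderiv i) f * X i + f) = slc i c ((pderiv i) f * X i) + slc i c f from
        MvPolynomial.eval₂_add _ _, hmul, hX, if_pos rfl, hf]
      simp
    · rw [pderiv_X_of_ne h, mul_zero, add_zero]
      simp only [if_neg h, Polynomial.derivative_mul, Polynomial.derivative_C, mul_zero, add_zero]
      rw [hmul, hX, if_neg h, hf]

lemma Vp_sub {p : ℕ} {a b : MvPolynomial (Fin 2) ℝ} (ha : a ∈ Vp p) (hb : b ∈ Vp p) :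
    a - b ∈ Vp p := by
  have hneg : ∀ n : Fin 2, MvPolynomial.degreeOf n (-b) = MvPolynomial.degreeOf n b := by
    intro n; simp [MvPolynomial.degreeOf, MvPolynomial.degrees_neg]
  constructor <;>
  · rw [sub_eq_add_neg]
    refine le_trans (MvPolynomial.degreeOf_add_le _ _ _) ?_
    rw [hneg]
    first
      | exact max_le ha.1 hb.1
      | exact max_le ha.2 hb.2

lemma ev_sub (a b : MvPolynomial (Fin 2) ℝ) (x t : ℝ) :
    ev (a - b) x t = ev a x t - ev b x t := by simp [ev]

lemma ev_pderiv_sub (n : Fin 2) (a b : MvPolynomial (Fin 2) ℝ) (x t : ℝ) :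
    ev (pderiv n (a - b)) x t = ev (pderiv n a) x t - ev (pderiv n b) x t := by
  rw [map_sub, ev_sub]

lemma poly_integral_deriv (P : Polynomial ℝ) :
    ∫ x in (-1 : ℝ)..1, P.derivative.eval x = P.eval 1 - P.eval (-1) := by
  rw [show (fun x => P.derivative.eval x) = deriv (fun x => P.eval x) by
    funext x; rw [Polynomial.deriv]]
  exact intervalIntegral.integral_deriv_eq_sub
    (fun x _ => (P.hasDerivAt x).differentiableAt)
    (by rw [show deriv (fun x => P.eval x) = fun x => P.derivative.eval x by
          funext x; rw [Polynomial.deriv]]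
        exact (P.derivative.continuous_aeval).intervalIntegrable _ _)

section
variable {p : ℕ} (hp : 1 ≤ p) (ξ w : Fin (p + 1) → ℝ)
  (hquad : ∀ f : Polynomial ℝ, f.natDegree ≤ 2 * p - 1 →
      ∑ i, w i * f.eval (ξ i) = ∫ x in (-1 : ℝ)..1, f.eval x)

include hp hquad

lemma quad_sq (F : Polynomial ℝ) (hF : F.natDegree ≤ p) :
    ∑ j, w j * (F.eval (ξ j) * F.derivative.eval (ξ j))
      = (F.eval 1) ^ 2 / 2 - (F.eval (-1)) ^ 2 / 2 := by
  have hdeg : (F * F).derivative.natDegree ≤ 2 * p - 1 := by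
    have h1 : (F * F).natDegree ≤ 2 * p := le_trans (Polynomial.natDegree_mul_le) (by omega)
    have h2 := Polynomial.natDegree_derivative_le (F * F)
    omega
  have h := hquad (F * F).derivative hdeg
  rw [poly_integral_deriv (F * F)] at h
  have hexp : ∀ x : ℝ, (F * F).derivative.eval x = 2 * (F.eval x * F.derivative.eval x) := by
    intro x; rw [Polynomial.derivative_mul]; simp; ring
  have h2 : ∑ i, w i * (F * F).derivative.eval (ξ i)
      = 2 * ∑ j, w j * (F.eval (ξ j) * F.derivative.eval (ξ j)) := by
    rw [Finset.mul_sum]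
    exact Finset.sum_congr rfl fun i _ => by rw [hexp]; ring
  rw [h2] at h
  simp only [Polynomial.eval_mul] at h
  nlinarith [h]

lemma sumT (Q : MvPolynomial (Fin 2) ℝ) (hQ : Q ∈ Vp p) (x : ℝ) :
    ∑ j, w j * (ev Q x (ξ j) * ev (pderiv 1 Q) x (ξ j))
      = (ev Q x 1) ^ 2 / 2 - (ev Q x (-1)) ^ 2 / 2 := by
  have h := quad_sq hp ξ w hquad (slc 1 x Q) (le_trans (slc_natDegree 1 x Q) hQ.2)
  rw [slc_derivative] at h
  simp only [slcT_eval] at h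
  exact h

lemma sumX (Q : MvPolynomial (Fin 2) ℝ) (hQ : Q ∈ Vp p) (t : ℝ) :
    ∑ i, w i * (ev Q (ξ i) t * ev (pderiv 0 Q) (ξ i) t)
      = (ev Q 1 t) ^ 2 / 2 - (ev Q (-1) t) ^ 2 / 2 := by
  have h := quad_sq hp ξ w hquad (slc 0 t Q) (le_trans (slc_natDegree 0 t Q) hQ.1)
  rw [slc_derivative] at h
  simp only [slcX_eval] at h
  exact h

lemma dVol_energy (ν : ℝ) (Q : MvPolynomial (Fin 2) ℝ) (hQ : Q ∈ Vp p) :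
    dVol ξ w (fun x t => ev Q x t * (ev (pderiv 1 Q) x t + ν * ev (pderiv 0 Q) x t))
      = (∑ i, w i * ((ev Q (ξ i) 1) ^ 2 / 2 - (ev Q (ξ i) (-1)) ^ 2 / 2))
        + ν * (∑ j, w j * ((ev Q 1 (ξ j)) ^ 2 / 2 - (ev Q (-1) (ξ j)) ^ 2 / 2)) := by
  have hsplit : dVol ξ w (fun x t => ev Q x t * (ev (pderiv 1 Q) x t + ν * ev (pderiv 0 Q) x t))
      = (∑ i, ∑ j, w i * w j * (ev Q (ξ i) (ξ j) * ev (pderiv 1 Q) (ξ i) (ξ j)))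
        + ν * (∑ i, ∑ j, w i * w j * (ev Q (ξ i) (ξ j) * ev (pderiv 0 Q) (ξ i) (ξ j))) := by
    rw [dVol, Finset.mul_sum, ← Finset.sum_add_distrib]
    refine Finset.sum_congr rfl fun i _ => ?_
    rw [Finset.mul_sum, ← Finset.sum_add_distrib]
    exact Finset.sum_congr rfl fun j _ => by ring
  rw [hsplit]
  congr 1
  · refine Finset.sum_congr rfl fun i _ => ?_
    rw [show (∑ j, w i * w j * (ev Q (ξ i) (ξ j) * ev (pderiv 1 Q) (ξ i) (ξ j)))
        = w i * ∑ j, w j * (ev Q (ξ i) (ξ j) * ev (pderiv 1 Q) (ξ i) (ξ j)) by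
      rw [Finset.mul_sum]; exact Finset.sum_congr rfl fun j _ => by ring]
    rw [sumT hp ξ w hquad Q hQ]
  · congr 1
    rw [Finset.sum_comm]
    refine Finset.sum_congr rfl fun j _ => ?_
    rw [show (∑ i, w i * w j * (ev Q (ξ i) (ξ j) * ev (pderiv 0 Q) (ξ i) (ξ j)))
        = w j * ∑ i, w i * (ev Q (ξ i) (ξ j) * ev (pderiv 0 Q) (ξ i) (ξ j)) by
      rw [Finset.mul_sum]; exact Finset.sum_congr rfl fun i _ => by ring]
    rw [sumX hp ξ w hquad Q hQ]

end

/-- Theorem 4.2: stability of the 1D locally implicit ADER-DG scheme.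
Consider the periodic 1D scheme with `K ≥ 1` elements, CFL number `0 ≤ ν ≤ 1`,
previous-step data `g k`, predictors `q̃ k` and correctors `q k`; assume each predictor
matches the previous solution at the beginning of the time step.  With
`ψ k := q k − q̃ k`, define `γ k ∈ ℝ^{p+1}` by `(γ k) i = (ψ k)(ξ i, 1)` and
`β k ∈ ℝ^{p+1}` by `(β k) j = (q̃ (k−1))(1, ξ j) − (q̃ k)(−1, ξ j)`.  Suppose there is a
linear map `A : ℝ^{p+1} → ℝ^{p+1}` such that `γ k = ν • A (β k)` for every `k`, and
`‖A v‖_w ≤ ‖v‖_w` for all `v`, where `‖v‖_w = √(∑ i, w i * v i ²)`.  Then the scheme is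
numerically stable: the total discrete energy does not increase over the time step,
`∑ k ∑ i w i ½ (q k)(ξ i, 1)² ≤ ∑ k ∑ i w i ½ (g k)(ξ i)²`. -/
theorem scheme_stability
    (p : ℕ) (hp : 1 ≤ p)
    (ξ w : Fin (p + 1) → ℝ)
    (hmono : StrictMono ξ)
    (hξ0 : ξ 0 = -1) (hξlast : ξ (Fin.last p) = 1)
    (hw : ∀ i, 0 < w i)
    (hquad : ∀ f : Polynomial ℝ, f.natDegree ≤ 2 * p - 1 →
      ∑ i, w i * f.eval (ξ i) = ∫ x in (-1 : ℝ)..1, f.eval x)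
    (K : ℕ) (hK : 1 ≤ K) [NeZero K]
    (ν : ℝ) (hν0 : 0 ≤ ν) (hν1 : ν ≤ 1)
    (g : ZMod K → Polynomial ℝ) (hg : ∀ k, (g k).natDegree ≤ p)
    (qt : ZMod K → MvPolynomial (Fin 2) ℝ) (hqtV : ∀ k, qt k ∈ Vp p)
    (hpred : ∀ k, PredictorEq ξ w ν (g k) (qt k))
    (hinit : ∀ k, ∀ x : ℝ, ev (qt k) x (-1) = (g k).eval x)
    (q : ZMod K → MvPolynomial (Fin 2) ℝ) (hqV : ∀ k, q k ∈ Vp p)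
    (hcor : ∀ k, CorrectorEq ξ w ν (g k) (traceRight (qt (k - 1))) (traceRight (qt k)) (q k))
    (A : (Fin (p + 1) → ℝ) →ₗ[ℝ] (Fin (p + 1) → ℝ))
    (hγβ : ∀ k : ZMod K,
      (fun i => ev (q k - qt k) (ξ i) 1) =
        ν • A (fun j => ev (qt (k - 1)) 1 (ξ j) - ev (qt k) (-1) (ξ j)))
    (hAnorm : ∀ v : Fin (p + 1) → ℝ,
      Real.sqrt (∑ i, w i * (A v i) ^ 2) ≤ Real.sqrt (∑ i, w i * (v i) ^ 2)) :
    ∑ k : ZMod K, ∑ i, w i * (1 / 2 * (ev (q k) (ξ i) 1) ^ 2)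
      ≤ ∑ k : ZMod K, ∑ i, w i * (1 / 2 * ((g k).eval (ξ i)) ^ 2) := by
  -- Equation (C): corrector tested with q k
  have hC : ∀ k : ZMod K,
      (∑ i, w i * ((ev (q k) (ξ i) 1) ^ 2 / 2 - (ev (q k) (ξ i) (-1)) ^ 2 / 2
          + ev (q k) (ξ i) (-1) * (ev (q k) (ξ i) (-1) - (g k).eval (ξ i))))
      + (∑ j, w j * (ν * ((ev (q k) 1 (ξ j)) ^ 2 / 2 - (ev (q k) (-1) (ξ j)) ^ 2 / 2
          + ev (q k) 1 (ξ j) * (ev (qt k) 1 (ξ j) - ev (q k) 1 (ξ j))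
          - ev (q k) (-1) (ξ j) * (ev (qt (k - 1)) 1 (ξ j) - ev (q k) (-1) (ξ j))))) = 0 := by
    intro k
    have h0 := hcor k (q k) (hqV k)
    rw [dVol_energy hp ξ w hquad ν (q k) (hqV k)] at h0
    simp only [dT, dX, traceRight_eval] at h0
    have e1 : (∑ i, w i * ((ev (q k) (ξ i) 1) ^ 2 / 2 - (ev (q k) (ξ i) (-1)) ^ 2 / 2
          + ev (q k) (ξ i) (-1) * (ev (q k) (ξ i) (-1) - (g k).eval (ξ i))))
        = (∑ i, w i * ((ev (q k) (ξ i) 1) ^ 2 / 2 - (ev (q k) (ξ i) (-1)) ^ 2 / 2))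
          + (∑ i, w i * (ev (q k) (ξ i) (-1) * (ev (q k) (ξ i) (-1) - (g k).eval (ξ i)))) := by
      rw [← Finset.sum_add_distrib]
      exact Finset.sum_congr rfl fun i _ => by ring
    have e2 : (∑ j, w j * (ν * ((ev (q k) 1 (ξ j)) ^ 2 / 2 - (ev (q k) (-1) (ξ j)) ^ 2 / 2
          + ev (q k) 1 (ξ j) * (ev (qt k) 1 (ξ j) - ev (q k) 1 (ξ j))
          - ev (q k) (-1) (ξ j) * (ev (qt (k - 1)) 1 (ξ j) - ev (q k) (-1) (ξ j)))))
        = ν * (∑ j, w j * ((ev (q k) 1 (ξ j)) ^ 2 / 2 - (ev (q k) (-1) (ξ j)) ^ 2 / 2))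
          + ν * (∑ j, w j * (ev (q k) 1 (ξ j) * (ev (qt k) 1 (ξ j) - ev (q k) 1 (ξ j))))
          - ν * (∑ j, w j * (ev (q k) (-1) (ξ j) * (ev (qt (k - 1)) 1 (ξ j) - ev (q k) (-1) (ξ j)))) := by
      rw [Finset.mul_sum, Finset.mul_sum, Finset.mul_sum, ← Finset.sum_add_distrib,
        ← Finset.sum_sub_distrib]
      exact Finset.sum_congr rfl fun j _ => by ring
    rw [e1, e2]
    linarith [h0]
  -- Equation (D): (corrector - predictor) tested with ψ = q k - qt k
  have hD : ∀ k : ZMod K,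
      (∑ i, w i * ((ev (q k - qt k) (ξ i) 1) ^ 2 / 2 - (ev (q k - qt k) (ξ i) (-1)) ^ 2 / 2
          + ev (q k - qt k) (ξ i) (-1) * (ev (q k) (ξ i) (-1) - (g k).eval (ξ i))))
      + (∑ j, w j * (ν * ((ev (q k - qt k) 1 (ξ j)) ^ 2 / 2 - (ev (q k - qt k) (-1) (ξ j)) ^ 2 / 2
          + ev (q k - qt k) 1 (ξ j) * (ev (qt k) 1 (ξ j) - ev (q k) 1 (ξ j))
          - ev (q k - qt k) (-1) (ξ j) * (ev (qt (k - 1)) 1 (ξ j) - ev (q k) (-1) (ξ j))))) = 0 := by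
    intro k
    have hψ : q k - qt k ∈ Vp p := Vp_sub (hqV k) (hqtV k)
    have h1 := hcor k (q k - qt k) hψ
    have h2 := hpred k (q k - qt k) hψ
    have hva : dVol ξ w (fun x t => ev (q k - qt k) x t *
          (ev (pderiv 1 (q k)) x t + ν * ev (pderiv 0 (q k)) x t))
        - dVol ξ w (fun x t => ev (q k - qt k) x t *
          (ev (pderiv 1 (qt k)) x t + ν * ev (pderiv 0 (qt k)) x t))
        = dVol ξ w (fun x t => ev (q k - qt k) x t *
          (ev (pderiv 1 (q k - qt k)) x t + ν * ev (pderiv 0 (q k - qt k)) x t)) := by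
      simp only [dVol, ← Finset.sum_sub_distrib]
      refine Finset.sum_congr rfl fun i _ => Finset.sum_congr rfl fun j _ => ?_
      rw [ev_pderiv_sub, ev_pderiv_sub]
      ring
    have hvb := dVol_energy hp ξ w hquad ν (q k - qt k) hψ
    have htb : dT ξ w (fun x t => ev (q k - qt k) x t * (ev (qt k) x t - (g k).eval x)) (-1)
        = 0 := by
      rw [dT]
      apply Finset.sum_eq_zero
      intro i _
      rw [hinit k (ξ i)]
      simp
    rw [htb, add_zero] at h2
    simp only [dT, dX, traceRight_eval] at h1
    have e1 : (∑ i, w i * ((ev (q k - qt k) (ξ i) 1) ^ 2 / 2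
            - (ev (q k - qt k) (ξ i) (-1)) ^ 2 / 2
          + ev (q k - qt k) (ξ i) (-1) * (ev (q k) (ξ i) (-1) - (g k).eval (ξ i))))
        = (∑ i, w i * ((ev (q k - qt k) (ξ i) 1) ^ 2 / 2
            - (ev (q k - qt k) (ξ i) (-1)) ^ 2 / 2))
          + (∑ i, w i * (ev (q k - qt k) (ξ i) (-1)
            * (ev (q k) (ξ i) (-1) - (g k).eval (ξ i)))) := by
      rw [← Finset.sum_add_distrib]
      exact Finset.sum_congr rfl fun i _ => by ring
    have e2 : (∑ j, w j * (ν * ((ev (q k - qt k) 1 (ξ j)) ^ 2 / 2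
            - (ev (q k - qt k) (-1) (ξ j)) ^ 2 / 2
          + ev (q k - qt k) 1 (ξ j) * (ev (qt k) 1 (ξ j) - ev (q k) 1 (ξ j))
          - ev (q k - qt k) (-1) (ξ j) * (ev (qt (k - 1)) 1 (ξ j) - ev (q k) (-1) (ξ j)))))
        = ν * (∑ j, w j * ((ev (q k - qt k) 1 (ξ j)) ^ 2 / 2
            - (ev (q k - qt k) (-1) (ξ j)) ^ 2 / 2))
          + ν * (∑ j, w j * (ev (q k - qt k) 1 (ξ j)
            * (ev (qt k) 1 (ξ j) - ev (q k) 1 (ξ j))))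
          - ν * (∑ j, w j * (ev (q k - qt k) (-1) (ξ j)
            * (ev (qt (k - 1)) 1 (ξ j) - ev (q k) (-1) (ξ j)))) := by
      rw [Finset.mul_sum, Finset.mul_sum, Finset.mul_sum, ← Finset.sum_add_distrib,
        ← Finset.sum_sub_distrib]
      exact Finset.sum_congr rfl fun j _ => by ring
    rw [e1, e2]
    linarith [h1, h2, hva, hvb]
  -- Equation (E): the per-element energy identity
  have Ek : ∀ k : ZMod K,
      (∑ i, w i * (1 / 2 * (ev (q k) (ξ i) 1) ^ 2))
        = (∑ i, w i * (1 / 2 * ((g k).eval (ξ i)) ^ 2))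
          + (∑ i, w i * ((ev (q k) (ξ i) 1 - ev (qt k) (ξ i) 1) ^ 2 / 2))
          - ν * (∑ j, w j * ((ev (qt (k - 1)) 1 (ξ j) - ev (qt k) (-1) (ξ j)) ^ 2 / 2))
          + ν * (∑ j, w j * ((ev (qt (k - 1)) 1 (ξ j)) ^ 2 / 2))
          - ν * (∑ j, w j * ((ev (qt k) 1 (ξ j)) ^ 2 / 2)) := by
    intro k
    have hIi : (∑ i, w i * (1 / 2 * (ev (q k) (ξ i) 1) ^ 2))
        - (∑ i, w i * (1 / 2 * ((g k).eval (ξ i)) ^ 2))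
        - (∑ i, w i * ((ev (q k) (ξ i) 1 - ev (qt k) (ξ i) 1) ^ 2 / 2))
        = (∑ i, w i * ((ev (q k) (ξ i) 1) ^ 2 / 2 - (ev (q k) (ξ i) (-1)) ^ 2 / 2
            + ev (q k) (ξ i) (-1) * (ev (q k) (ξ i) (-1) - (g k).eval (ξ i))))
          - (∑ i, w i * ((ev (q k - qt k) (ξ i) 1) ^ 2 / 2
              - (ev (q k - qt k) (ξ i) (-1)) ^ 2 / 2
            + ev (q k - qt k) (ξ i) (-1) * (ev (q k) (ξ i) (-1) - (g k).eval (ξ i)))) := by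
      rw [← Finset.sum_sub_distrib, ← Finset.sum_sub_distrib, ← Finset.sum_sub_distrib]
      refine Finset.sum_congr rfl fun i _ => ?_
      simp only [ev_sub, hinit k]
      ring
    have hIj : ν * (∑ j, w j * ((ev (qt (k - 1)) 1 (ξ j) - ev (qt k) (-1) (ξ j)) ^ 2 / 2))
        - ν * (∑ j, w j * ((ev (qt (k - 1)) 1 (ξ j)) ^ 2 / 2))
        + ν * (∑ j, w j * ((ev (qt k) 1 (ξ j)) ^ 2 / 2))
        = (∑ j, w j * (ν * ((ev (q k) 1 (ξ j)) ^ 2 / 2 - (ev (q k) (-1) (ξ j)) ^ 2 / 2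
            + ev (q k) 1 (ξ j) * (ev (qt k) 1 (ξ j) - ev (q k) 1 (ξ j))
            - ev (q k) (-1) (ξ j) * (ev (qt (k - 1)) 1 (ξ j) - ev (q k) (-1) (ξ j)))))
          - (∑ j, w j * (ν * ((ev (q k - qt k) 1 (ξ j)) ^ 2 / 2
              - (ev (q k - qt k) (-1) (ξ j)) ^ 2 / 2
            + ev (q k - qt k) 1 (ξ j) * (ev (qt k) 1 (ξ j) - ev (q k) 1 (ξ j))
            - ev (q k - qt k) (-1) (ξ j) * (ev (qt (k - 1)) 1 (ξ j) - ev (q k) (-1) (ξ j))))) := by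
      rw [Finset.mul_sum, Finset.mul_sum, Finset.mul_sum, ← Finset.sum_sub_distrib,
        ← Finset.sum_add_distrib, ← Finset.sum_sub_distrib]
      refine Finset.sum_congr rfl fun j _ => ?_
      simp only [ev_sub]
      ring
    linarith [hC k, hD k, hIi, hIj]
  -- the operator norm bound, squared
  have hA2 : ∀ v : Fin (p + 1) → ℝ, (∑ i, w i * (A v i) ^ 2) ≤ ∑ i, w i * (v i) ^ 2 := by
    intro v
    have h1 : 0 ≤ ∑ i, w i * (A v i) ^ 2 :=
      Finset.sum_nonneg fun i _ => mul_nonneg (hw i).le (sq_nonneg _)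
    have h2 : 0 ≤ ∑ i, w i * (v i) ^ 2 :=
      Finset.sum_nonneg fun i _ => mul_nonneg (hw i).le (sq_nonneg _)
    nlinarith [hAnorm v, Real.sq_sqrt h1, Real.sq_sqrt h2,
      Real.sqrt_nonneg (∑ i, w i * (A v i) ^ 2), Real.sqrt_nonneg (∑ i, w i * (v i) ^ 2)]
  -- per-element dissipation bound
  have hkb : ∀ k : ZMod K,
      (∑ i, w i * ((ev (q k) (ξ i) 1 - ev (qt k) (ξ i) 1) ^ 2 / 2))
        ≤ ν * (∑ j, w j * ((ev (qt (k - 1)) 1 (ξ j) - ev (qt k) (-1) (ξ j)) ^ 2 / 2)) := by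
    intro k
    have hpt : ∀ i, ev (q k) (ξ i) 1 - ev (qt k) (ξ i) 1
        = ν * A (fun j => ev (qt (k - 1)) 1 (ξ j) - ev (qt k) (-1) (ξ j)) i := by
      intro i
      have h := congrFun (hγβ k) i
      rw [ev_sub] at h
      simpa using h
    have hL : (∑ i, w i * ((ev (q k) (ξ i) 1 - ev (qt k) (ξ i) 1) ^ 2 / 2))
        = ν ^ 2 / 2 * ∑ i, w i *
            (A (fun j => ev (qt (k - 1)) 1 (ξ j) - ev (qt k) (-1) (ξ j)) i) ^ 2 := by
      rw [Finset.mul_sum]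
      refine Finset.sum_congr rfl fun i _ => ?_
      rw [hpt i]
      ring
    have hR : ν * (∑ j, w j * ((ev (qt (k - 1)) 1 (ξ j) - ev (qt k) (-1) (ξ j)) ^ 2 / 2))
        = ν / 2 * ∑ j, w j * ((ev (qt (k - 1)) 1 (ξ j) - ev (qt k) (-1) (ξ j)) ^ 2) := by
      rw [Finset.mul_sum, Finset.mul_sum]
      exact Finset.sum_congr rfl fun j _ => by ring
    have hSA := hA2 (fun j => ev (qt (k - 1)) 1 (ξ j) - ev (qt k) (-1) (ξ j))
    have hSAnn : 0 ≤ ∑ i, w i *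
        (A (fun j => ev (qt (k - 1)) 1 (ξ j) - ev (qt k) (-1) (ξ j)) i) ^ 2 :=
      Finset.sum_nonneg fun i _ => mul_nonneg (hw i).le (sq_nonneg _)
    have hSβnn : 0 ≤ ∑ j, w j * ((ev (qt (k - 1)) 1 (ξ j) - ev (qt k) (-1) (ξ j)) ^ 2) :=
      Finset.sum_nonneg fun j _ => mul_nonneg (hw j).le (sq_nonneg _)
    have hν2 : ν ^ 2 ≤ ν := by nlinarith
    rw [hL, hR]
    nlinarith [mul_le_mul_of_nonneg_left hSA (by positivity : (0:ℝ) ≤ ν ^ 2 / 2),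
      mul_le_mul_of_nonneg_right (by linarith : ν ^ 2 / 2 ≤ ν / 2) hSβnn]
  -- telescoping of the flux terms over the periodic ring
  have htel : (∑ k : ZMod K, ν * (∑ j, w j * ((ev (qt (k - 1)) 1 (ξ j)) ^ 2 / 2)))
      = ∑ k : ZMod K, ν * (∑ j, w j * ((ev (qt k) 1 (ξ j)) ^ 2 / 2)) :=
    Fintype.sum_equiv (Equiv.subRight (1 : ZMod K)) _ _ (fun k => rfl)
  have hsum : (∑ k : ZMod K, ∑ i, w i * (1 / 2 * (ev (q k) (ξ i) 1) ^ 2))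
      = (∑ k : ZMod K, ∑ i, w i * (1 / 2 * ((g k).eval (ξ i)) ^ 2))
        + (∑ k : ZMod K, ((∑ i, w i * ((ev (q k) (ξ i) 1 - ev (qt k) (ξ i) 1) ^ 2 / 2))
            - ν * (∑ j, w j * ((ev (qt (k - 1)) 1 (ξ j) - ev (qt k) (-1) (ξ j)) ^ 2 / 2))))
        + ((∑ k : ZMod K, ν * (∑ j, w j * ((ev (qt (k - 1)) 1 (ξ j)) ^ 2 / 2)))
          - (∑ k : ZMod K, ν * (∑ j, w j * ((ev (qt k) 1 (ξ j)) ^ 2 / 2)))) := by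
    rw [← Finset.sum_add_distrib, ← Finset.sum_sub_distrib, ← Finset.sum_add_distrib]
    exact Finset.sum_congr rfl fun k _ => by linarith [Ek k]
  have hle : (∑ k : ZMod K, ((∑ i, w i * ((ev (q k) (ξ i) 1 - ev (qt k) (ξ i) 1) ^ 2 / 2))
      - ν * (∑ j, w j * ((ev (qt (k - 1)) 1 (ξ j) - ev (qt k) (-1) (ξ j)) ^ 2 / 2)))) ≤ 0 :=
    Finset.sum_nonpos fun k _ => sub_nonpos.mpr (hkb k)
  linarith [hsum, htel, hle]
end
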